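/- arXiv:1101.3489 — 2 statements merged into one kernel-verified Lean document; each statement's English description precedes it below -/
import Mathlib

section
/- For any positive integer n and any integer k ≥ 2, the singular series ∑_{q=1}^∞ (μ(q)^k / φ(q)^k) c_q(-n) converges absolutely and equals the Euler product ∏_{p | n} (1 - (-1/(p-1))^{k-1}) · ∏_{p ∤ n} (1 - (-1/(p-1))^k). -/
open Real Complex ArithmeticFunction
open scoped ArithmeticFunction.Moebius

/-- `e(x) = exp(2πix)` -/
noncomputable def e (x : ℝ) : ℂ := Complex.exp (2 * Real.pi * Complex.I * x)

/-- The Ramanujan sum `c_q(m) = ∑_{a ≤ q, (a,q)=1} e(ma/q)`. -/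
noncomputable def ramanujanSum (q : ℕ) (m : ℤ) : ℂ :=
  ∑ a ∈ (Finset.Icc 1 q).filter (fun a => Nat.Coprime a q),
    e ((m : ℝ) * (a : ℝ) / (q : ℝ))

open Finset

lemma e_int (j : ℤ) : e j = 1 := by
  unfold e
  rw [show (2 * Real.pi * Complex.I * (j:ℝ) : ℂ) = (j:ℤ) * (2 * Real.pi * Complex.I) by push_cast; ring]
  exact_mod_cast Complex.exp_int_mul_two_pi_mul_I j


lemma geom_lemma (r : ℕ) (hr : 0 < r) (m : ℤ) :
    ∑ b ∈ Icc 1 r, e ((m:ℝ) * (b:ℝ) / (r:ℝ)) = if (r:ℤ) ∣ m then (r:ℂ) else 0 := by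
  set z : ℂ := e ((m:ℝ) / (r:ℝ)) with hz
  have hrR : (r:ℝ) ≠ 0 := Nat.cast_ne_zero.mpr hr.ne'
  have hpow : ∀ b : ℕ, e ((m:ℝ) * (b:ℝ) / (r:ℝ)) = z ^ b := by
    intro b
    rw [hz]
    unfold e
    rw [← Complex.exp_nat_mul]
    congr 1
    push_cast
    ring
  have hzr : z ^ r = 1 := by
    rw [← hpow r]
    rw [mul_div_assoc, div_self hrR, mul_one]
    exact e_int m
  have hz1 : z = 1 ↔ (r:ℤ) ∣ m := by
    constructor
    · intro h
      rw [hz] at h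
      unfold e at h
      rw [Complex.exp_eq_one_iff] at h
      obtain ⟨j, hj⟩ := h
      have hπ : (2 * Real.pi * Complex.I : ℂ) ≠ 0 := by
        simp [Real.pi_ne_zero, Complex.I_ne_zero]
      have : ((m:ℝ)/(r:ℝ) : ℂ) = (j:ℂ) := by
        push_cast at hj
        apply mul_left_cancel₀ hπ
        push_cast; rw [hj]; ring
      have hre : (m:ℝ)/(r:ℝ) = (j:ℝ) := by exact_mod_cast this
      refine ⟨j, ?_⟩
      have : (m:ℝ) = (r:ℝ) * (j:ℝ) := by field_simp at hre; linarith [hre]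
      exact_mod_cast this
    · rintro ⟨j, rfl⟩
      rw [hz]
      have h2 : (((r:ℤ) * j : ℤ) : ℝ) / (r:ℝ) = ((j:ℤ):ℝ) := by push_cast; field_simp
      rw [h2]
      exact e_int j
  simp_rw [hpow]
  by_cases h : (r:ℤ) ∣ m
  · rw [if_pos h]
    have : z = 1 := hz1.mpr h
    simp [this]
  · rw [if_neg h]
    have hzne : z ≠ 1 := fun hc => h (hz1.mp hc)
    have : ∑ b ∈ Icc 1 r, z ^ b = z * ∑ b ∈ range r, z ^ b := by
      rw [Finset.mul_sum]
      rw [← Finset.Ico_add_one_right_eq_Icc]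
      rw [Finset.sum_Ico_eq_sum_range]
      simp [pow_succ, mul_comm, pow_add]
    rw [this, geom_sum_eq hzne, hzr]
    simp

lemma moebius_sum_divisors (g : ℕ) :
    ∑ d ∈ g.divisors, ((μ d : ℤ) : ℂ) = if g = 1 then 1 else 0 := by
  have h := congrFun (congrArg (fun f : ArithmeticFunction ℂ => (f : ℕ → ℂ))
    (coe_moebius_mul_coe_zeta (R := ℂ))) g
  simp only [coe_mul_zeta_apply, one_apply, intCoe_apply] at h
  exact h


lemma ramanujanSum_eq_sum_divisors (q : ℕ) (hq : 0 < q) (m : ℤ) :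
    ramanujanSum q m = ∑ d ∈ q.divisors, ((μ d : ℤ) : ℂ) *
      (if ((q/d : ℕ):ℤ) ∣ m then ((q/d : ℕ):ℂ) else 0) := by
  unfold ramanujanSum
  rw [Finset.sum_filter]
  have step1 : ∀ a ∈ Icc 1 q,
      (if Nat.Coprime a q then e ((m:ℝ) * a / q) else 0)
        = ∑ d ∈ q.divisors.filter (· ∣ a), ((μ d : ℤ):ℂ) * e ((m:ℝ) * a / q) := by
    intro a ha
    rw [← Finset.sum_mul]
    have hset : q.divisors.filter (· ∣ a) = (Nat.gcd a q).divisors := by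
      ext d
      simp only [Nat.mem_divisors, Finset.mem_filter, Nat.dvd_gcd_iff]
      constructor
      · rintro ⟨⟨hdq, hq0⟩, hda⟩
        exact ⟨⟨hda, hdq⟩, Nat.gcd_ne_zero_right hq0⟩
      · rintro ⟨⟨hda, hdq⟩, -⟩
        exact ⟨⟨hdq, hq.ne'⟩, hda⟩
    rw [hset, moebius_sum_divisors]
    unfold Nat.Coprime
    by_cases h : Nat.gcd a q = 1 <;> simp [h]
  rw [Finset.sum_congr rfl step1]
  simp_rw [Finset.sum_filter]
  rw [Finset.sum_comm]
  refine Finset.sum_congr rfl fun d hd => ?_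
  obtain ⟨hdq, -⟩ := Nat.mem_divisors.mp hd
  have hd0 : 0 < d := Nat.pos_of_mem_divisors hd
  have hc0 : 0 < q / d := Nat.div_pos (Nat.le_of_dvd hq hdq) hd0
  rw [← Finset.sum_filter, ← Finset.mul_sum]
  congr 1
  rw [← geom_lemma (q/d) hc0 m]
  refine Finset.sum_nbij' (fun a => a / d) (fun b => d * b) ?_ ?_ ?_ ?_ ?_
  · intro a ha
    simp only [Finset.mem_filter, Finset.mem_Icc] at ha
    obtain ⟨⟨h1, h2⟩, hda⟩ := ha
    simp only [Finset.mem_Icc]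
    exact ⟨(Nat.one_le_div_iff hd0).mpr (Nat.le_of_dvd h1 hda), Nat.div_le_div_right h2⟩
  · intro b hb
    simp only [Finset.mem_Icc] at hb
    simp only [Finset.mem_filter, Finset.mem_Icc]
    refine ⟨⟨Nat.one_le_iff_ne_zero.mpr (Nat.mul_ne_zero hd0.ne' (by omega)), ?_⟩, Dvd.intro b rfl⟩
    calc d * b ≤ d * (q / d) := Nat.mul_le_mul_left d hb.2
    _ = q := Nat.mul_div_cancel' hdq
  · intro a ha
    simp only [Finset.mem_filter] at ha
    exact Nat.mul_div_cancel' ha.2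
  · intro b hb
    exact Nat.mul_div_cancel_left b hd0
  · intro a ha
    simp only [Finset.mem_filter, Finset.mem_Icc] at ha
    obtain ⟨⟨h1, h2⟩, hda⟩ := ha
    congr 1
    have hql : (q:ℝ) = (d:ℝ) * ((q/d : ℕ):ℝ) := by
      exact_mod_cast (Nat.mul_div_cancel' hdq).symm
    have hal : (a:ℝ) = (d:ℝ) * ((a/d : ℕ):ℝ) := by
      exact_mod_cast (Nat.mul_div_cancel' hda).symm
    rw [hql, hal]
    have : (d:ℝ) ≠ 0 := Nat.cast_ne_zero.mpr hd0.ne'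
    field_simp

/-- The divisor-indicator arithmetic function `r ↦ r·[r ∣ n]`. -/
noncomputable def Gfun (n : ℕ) : ArithmeticFunction ℂ :=
  ⟨fun r => if r ∣ n ∧ 0 < r then (r:ℂ) else 0, by simp⟩

lemma Gfun_apply (n r : ℕ) : Gfun n r = if r ∣ n ∧ 0 < r then (r:ℂ) else 0 := rfl

lemma Gfun_mult (n : ℕ) : (Gfun n).IsMultiplicative := by
  constructor
  · simp [Gfun_apply]
  · intro x y hxy
    simp only [Gfun_apply]
    by_cases hx : x ∣ n ∧ 0 < x
    · by_cases hy : y ∣ n ∧ 0 < y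
      · rw [if_pos ⟨Nat.Coprime.mul_dvd_of_dvd_of_dvd hxy hx.1 hy.1,
          Nat.mul_pos hx.2 hy.2⟩, if_pos hx, if_pos hy, Nat.cast_mul]
      · rw [if_neg hy, mul_zero, if_neg]
        rintro ⟨hdvd, hpos⟩
        exact hy ⟨(dvd_mul_left y x).trans hdvd, Nat.pos_of_ne_zero (fun h => by simp [h] at hpos)⟩
    · rw [if_neg hx, zero_mul, if_neg]
      rintro ⟨hdvd, hpos⟩
      exact hx ⟨(dvd_mul_right x y).trans hdvd, Nat.pos_of_ne_zero (fun h => by simp [h] at hpos)⟩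

/-- Ramanujan sum as a Dirichlet convolution `μ * G`. -/
noncomputable def Cfun (n : ℕ) : ArithmeticFunction ℂ := (μ : ArithmeticFunction ℂ) * Gfun n

lemma Cfun_mult (n : ℕ) : (Cfun n).IsMultiplicative :=
  (isMultiplicative_moebius.intCast).mul (Gfun_mult n)

lemma ramanujanSum_eq_Cfun (n : ℕ) (hn : 1 ≤ n) (q : ℕ) :
    ramanujanSum q (-(n:ℤ)) = Cfun n q := by
  rcases Nat.eq_zero_or_pos q with rfl | hq
  · rw [ArithmeticFunction.map_zero]
    unfold ramanujanSum
    simp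
  · rw [ramanujanSum_eq_sum_divisors q hq, Cfun, mul_apply,
      Nat.sum_divisorsAntidiagonal (fun a b => (μ:ArithmeticFunction ℂ) a * Gfun n b)]
    refine Finset.sum_congr rfl fun d hd => ?_
    rw [intCoe_apply, Gfun_apply]
    congr 1
    have hpos : 0 < q / d :=
      Nat.div_pos (Nat.le_of_dvd hq (Nat.mem_divisors.mp hd).1) (Nat.pos_of_mem_divisors hd)
    have : ((q/d : ℕ):ℤ) ∣ -(n:ℤ) ↔ (q/d) ∣ n := by
      rw [dvd_neg, Int.natCast_dvd_natCast]
    by_cases h : (q/d) ∣ n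
    · rw [if_pos (this.mpr h), if_pos ⟨h, hpos⟩]
    · rw [if_neg (fun hc => h (this.mp hc)), if_neg (fun hc => h hc.1)]

lemma ramanujanSum_prime (n : ℕ) (hn : 1 ≤ n) {p : ℕ} (hp : p.Prime) :
    ramanujanSum p (-(n:ℤ)) = (if p ∣ n then (p:ℂ) else 0) - 1 := by
  rw [ramanujanSum_eq_sum_divisors p hp.pos, hp.divisors,
    Finset.sum_pair hp.one_lt.ne]
  have h1 : p / 1 = p := Nat.div_one p
  have h2 : p / p = 1 := Nat.div_self hp.pos
  rw [h1, h2]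
  simp only [moebius_apply_one, moebius_apply_prime hp]
  have : ((1:ℕ):ℤ) ∣ -(n:ℤ) := one_dvd _
  rw [if_pos this]
  have hdvd : ((p:ℕ):ℤ) ∣ -(n:ℤ) ↔ p ∣ n := by rw [dvd_neg, Int.natCast_dvd_natCast]
  by_cases h : p ∣ n
  · rw [if_pos (hdvd.mpr h), if_pos h]; push_cast; ring
  · rw [if_neg (fun hc => h (hdvd.mp hc)), if_neg h]; push_cast; ring

/-- for `n ≥ 1` and `k ≥ 2` the singular series
`∑_q μ(q)^k/φ(q)^k · c_q(-n)` converges absolutely and equals the Euler product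
`∏_{p | n} (1 - (-1/(p-1))^{k-1}) · ∏_{p ∤ n} (1 - (-1/(p-1))^k)`. -/
theorem sums_of_many_primes_stmt3 (n k : ℕ) (hn : 1 ≤ n) (hk : 2 ≤ k) :
    Summable (fun q : ℕ =>
      ‖((μ q : ℂ) ^ k / (Nat.totient q : ℂ) ^ k) * ramanujanSum q (-(n : ℤ))‖) ∧
    ∑' q : ℕ, ((μ q : ℂ) ^ k / (Nat.totient q : ℂ) ^ k) * ramanujanSum q (-(n : ℤ))
      = ∏' p : Nat.Primes,
          (if (p : ℕ) ∣ n then 1 - (-1 / ((p : ℕ) - 1 : ℂ)) ^ (k - 1)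
           else 1 - (-1 / ((p : ℕ) - 1 : ℂ)) ^ k) := by
  set f : ℕ → ℂ := fun q => ((μ q : ℂ) ^ k / (Nat.totient q : ℂ) ^ k) * ramanujanSum q (-(n:ℤ))
    with hf
  have hk0 : k ≠ 0 := by omega
  have h0 : f 0 = 0 := by
    simp [hf, ArithmeticFunction.map_zero, zero_pow hk0]
  have h1 : f 1 = 1 := by
    simp [hf, ramanujanSum_eq_Cfun n hn, (Cfun_mult n).1]
  have hmul : ∀ {x y : ℕ}, Nat.Coprime x y → f (x * y) = f x * f y := by
    intro x y hxy
    simp only [hf, ramanujanSum_eq_Cfun n hn]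
    rw [(Cfun_mult n).map_mul_of_coprime hxy,
      isMultiplicative_moebius.map_mul_of_coprime hxy, Nat.totient_mul hxy]
    push_cast
    rw [mul_pow, mul_pow, ← div_mul_div_comm]
    ring
  have hppow : ∀ (p b : ℕ), p.Prime → 2 ≤ b → f (p ^ b) = 0 := by
    intro p b hp hb
    have : μ (p ^ b) = 0 := by
      rw [moebius_apply_prime_pow hp (by omega)]
      exact if_neg (by omega)
    simp [hf, this, zero_pow hk0]
  -- norms
  set F : ℕ → ℝ := fun q => ‖f q‖ with hF
  have hF1 : F 1 = 1 := by simp [hF, h1]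
  have hFmul : ∀ {x y : ℕ}, Nat.Coprime x y → F (x * y) = F x * F y := by
    intro x y hxy
    simp [hF, hmul hxy]
  have hφprime : ∀ {p : ℕ}, p.Prime → ((Nat.totient p : ℂ)) = (p:ℂ) - 1 := by
    intro p hp
    rw [Nat.totient_prime hp, Nat.cast_sub hp.one_lt.le, Nat.cast_one]
  have hxne : ∀ {p : ℕ}, p.Prime → ((p:ℂ) - 1) ≠ 0 := by
    intro p hp
    rw [sub_ne_zero]
    exact_mod_cast hp.one_lt.ne'
  -- bound on F at primes
  have hFp : ∀ {p : ℕ}, p.Prime → F p ≤ (n:ℝ) / ((p:ℝ) - 1) ^ 2 := by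
    intro p hp
    have hy1 : (1:ℝ) ≤ (p:ℝ) - 1 := by
      have := hp.two_le
      have : (2:ℝ) ≤ (p:ℝ) := by exact_mod_cast this
      linarith
    have hy0 : (0:ℝ) < (p:ℝ) - 1 := by linarith
    have hyk : ((p:ℝ) - 1) ^ 2 ≤ ((p:ℝ) - 1) ^ k := pow_le_pow_right₀ hy1 hk
    have hnorm_x : ‖(p:ℂ) - 1‖ = (p:ℝ) - 1 := by
      rw [show ((p:ℂ) - 1) = ((p:ℝ) - 1 : ℝ) by push_cast; ring]
      rw [Complex.norm_real, Real.norm_of_nonneg hy0.le]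
    have hnorm_mu : ‖(μ p : ℂ)‖ = 1 := by
      rw [moebius_apply_prime hp]; push_cast; simp
    have hFval : F p = ‖ramanujanSum p (-(n:ℤ))‖ / ((p:ℝ) - 1) ^ k := by
      simp only [hF, hf, norm_mul, norm_div, norm_pow, hφprime hp, hnorm_mu, hnorm_x, one_pow]
      ring
    by_cases hdvd : p ∣ n
    · rw [hFval, ramanujanSum_prime n hn hp, if_pos hdvd]
      have : ‖(p:ℂ) - 1‖ = (p:ℝ) - 1 := hnorm_x
      rw [this]
      have hpn : (p:ℝ) ≤ (n:ℝ) := by exact_mod_cast Nat.le_of_dvd hn hdvd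
      calc ((p:ℝ) - 1) / ((p:ℝ) - 1) ^ k ≤ ((p:ℝ) - 1) / ((p:ℝ) - 1) ^ 2 := by
            gcongr
      _ ≤ (n:ℝ) / ((p:ℝ) - 1) ^ 2 := by gcongr; linarith
    · rw [hFval, ramanujanSum_prime n hn hp, if_neg hdvd]
      have : ‖(0:ℂ) - 1‖ = 1 := by simp
      rw [this]
      calc (1:ℝ) / ((p:ℝ) - 1) ^ k ≤ 1 / ((p:ℝ) - 1) ^ 2 := by gcongr
      _ ≤ (n:ℝ) / ((p:ℝ) - 1) ^ 2 := by gcongr; exact_mod_cast hn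
  -- tsum over prime powers (for F)
  have hFtsum : ∀ {p : ℕ}, p.Prime → ∑' b : ℕ, F (p ^ b) = 1 + F p := by
    intro p hp
    rw [tsum_eq_sum (s := {0, 1}) (by
      intro b hb
      simp only [Finset.mem_insert, Finset.mem_singleton] at hb
      have : 2 ≤ b := by omega
      simp [hF, hppow p b hp this])]
    rw [Finset.sum_pair (by norm_num : (0:ℕ) ≠ 1)]
    simp [hF1]
  have hFsummable_pp : ∀ {p : ℕ}, p.Prime → Summable (fun b : ℕ => ‖F (p ^ b)‖) := by
    intro p hp
    apply summable_of_ne_finset_zero (s := {0, 1})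
    intro b hb
    simp only [Finset.mem_insert, Finset.mem_singleton] at hb
    have : 2 ≤ b := by omega
    simp [hF, hppow p b hp this]
  -- the summable part
  have hg : Summable (fun j : ℕ => 1 / ((j:ℝ) + 1) ^ 2) := by
    have h2 : Summable (fun j : ℕ => 1 / ((j:ℝ)) ^ 2) :=
      Real.summable_one_div_nat_pow.mpr one_lt_two
    have := (summable_nat_add_iff 1).mpr h2
    refine this.congr fun j => ?_
    push_cast
    ring
  set B : ℝ := Real.exp ((n:ℝ) * ∑' j : ℕ, 1 / ((j:ℝ) + 1) ^ 2) with hB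
  have hsumF : Summable F := by
    apply summable_of_sum_range_le (c := B) (fun q => norm_nonneg _)
    intro N
    obtain ⟨-, hhs⟩ := EulerProduct.summable_and_hasSum_smoothNumbers_prod_primesBelow_tsum
      hF1 (fun {x y} h => hFmul h) (fun {p} hp => hFsummable_pp hp) N
    have hstep1 : ∑ q ∈ range N, F q ≤ ∏ p ∈ N.primesBelow, ∑' b : ℕ, F (p ^ b) := by
      have hind : ∀ q ∈ range N, F q = Set.indicator N.smoothNumbers F q := by
        intro q hq
        rcases Nat.eq_zero_or_pos q with rfl | hq0
        · rw [Set.indicator_of_notMem (fun hc => (Nat.mem_smoothNumbers.mp hc).1 rfl)]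
          simp [hF, h0]
        · rw [Set.indicator_of_mem]
          exact Nat.mem_smoothNumbers.mpr ⟨hq0.ne', fun p hp =>
            lt_of_le_of_lt (Nat.le_of_dvd hq0 (Nat.dvd_of_mem_primeFactorsList hp))
              (Finset.mem_range.mp hq)⟩
      rw [Finset.sum_congr rfl hind]
      calc ∑ q ∈ range N, Set.indicator N.smoothNumbers F q
          ≤ ∑' q : ℕ, Set.indicator N.smoothNumbers F q := by
            apply Summable.sum_le_tsum
            · intro q _
              exact Set.indicator_apply_nonneg (fun _ => norm_nonneg _)
            · exact (summable_subtype_iff_indicator).mp hhs.summable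
      _ = ∑' q : N.smoothNumbers, F q := (_root_.tsum_subtype _ _).symm
      _ = ∏ p ∈ N.primesBelow, ∑' b : ℕ, F (p ^ b) := hhs.tsum_eq
    refine hstep1.trans ?_
    have hstep2 : ∏ p ∈ N.primesBelow, ∑' b : ℕ, F (p ^ b)
        ≤ Real.exp (∑ p ∈ N.primesBelow, F p) := by
      rw [Real.exp_sum]
      apply Finset.prod_le_prod
      · intro p hp
        rw [hFtsum (Nat.prime_of_mem_primesBelow hp)]
        positivity
      · intro p hp
        rw [hFtsum (Nat.prime_of_mem_primesBelow hp), add_comm]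
        exact Real.add_one_le_exp _
    refine hstep2.trans ?_
    rw [hB, Real.exp_le_exp]
    calc ∑ p ∈ N.primesBelow, F p
        ≤ ∑ p ∈ N.primesBelow, (n:ℝ) * (1 / (((p - 2 : ℕ):ℝ) + 1) ^ 2) := by
          apply Finset.sum_le_sum
          intro p hp
          have hpp := Nat.prime_of_mem_primesBelow hp
          have h2p : 2 ≤ p := hpp.two_le
          have : (((p - 2 : ℕ):ℝ) + 1) = (p:ℝ) - 1 := by
            rw [Nat.cast_sub h2p]; push_cast; ring
          rw [this]
          calc F p ≤ (n:ℝ) / ((p:ℝ) - 1) ^ 2 := hFp hpp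
          _ = (n:ℝ) * (1 / ((p:ℝ) - 1) ^ 2) := by ring
    _ = (n:ℝ) * ∑ p ∈ N.primesBelow, (1 / (((p - 2 : ℕ):ℝ) + 1) ^ 2) := by
          rw [Finset.mul_sum]
    _ ≤ (n:ℝ) * ∑' j : ℕ, 1 / ((j:ℝ) + 1) ^ 2 := by
          apply mul_le_mul_of_nonneg_left _ (Nat.cast_nonneg n)
          have hinj : ∀ x ∈ N.primesBelow, ∀ y ∈ N.primesBelow, x - 2 = y - 2 → x = y := by
            intro x hx y hy hxy
            have h2x := (Nat.prime_of_mem_primesBelow hx).two_le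
            have h2y := (Nat.prime_of_mem_primesBelow hy).two_le
            omega
          rw [← Finset.sum_image (f := fun j : ℕ => 1 / ((j:ℝ) + 1) ^ 2) hinj]
          exact Summable.sum_le_tsum _ (fun j _ => by positivity) hg
  refine ⟨hsumF, ?_⟩
  rw [← EulerProduct.eulerProduct_tprod h1 (fun {x y} h => hmul h) hsumF h0]
  refine tprod_congr fun p => ?_
  have hp : (p:ℕ).Prime := p.prop
  -- tsum over prime powers for f
  have hftsum : ∑' b : ℕ, f ((p:ℕ) ^ b) = 1 + f p := by
    rw [tsum_eq_sum (s := {0, 1}) (by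
      intro b hb
      simp only [Finset.mem_insert, Finset.mem_singleton] at hb
      exact hppow (p:ℕ) b hp (by omega))]
    rw [Finset.sum_pair (by norm_num : (0:ℕ) ≠ 1)]
    simp [h1]
  rw [hftsum]
  -- value computation
  obtain ⟨j, rfl⟩ : ∃ j, k = j + 1 := ⟨k - 1, by omega⟩
  have hx0 : ((p:ℕ):ℂ) - 1 ≠ 0 := hxne hp
  simp only [hf, ramanujanSum_prime n hn hp, hφprime hp, moebius_apply_prime hp,
    Nat.add_sub_cancel]
  push_cast
  by_cases hdvd : (p:ℕ) ∣ n
  · rw [if_pos hdvd, if_pos hdvd]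
    generalize ((p:ℕ):ℂ) - 1 = x at hx0 ⊢
    simp only [pow_succ, div_pow]
    field_simp
    ring
  · rw [if_neg hdvd, if_neg hdvd]
    generalize ((p:ℕ):ℂ) - 1 = x at hx0 ⊢
    simp only [pow_succ, div_pow]
    field_simp
    ring
end

section
/- Let k ≥ 2 be an integer, N a large integer, z = 1/N - 2πiη, and suppose the interval ξ contains (-1/(2qQ), 1/(2qQ)) and is contained in (-1/(qQ), 1/(qQ)], where 1 ≤ q ≤ Q ≤ N^{1/2}/2. Then uniformly for 1 ≤ ℓ ≤ N, ∫_ξ e(-ℓη)/z^k dη = e^{-ℓ/N} ℓ^{k-1}/(k-1)! + O((qQ)^{k-1}). -/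
open Real Complex

open MeasureTheory Set Filter Topology FourierTransform

lemma intgr (z : ℂ) (hz : 0 < z.re) (n : ℕ) :
    IntegrableOn (fun t : ℝ => (t:ℂ)^n * Complex.exp (-(z*t))) (Set.Ioi 0) := by
  have h : IntegrableOn (fun x : ℝ => x ^ (n:ℝ) * Real.exp (-z.re * x)) (Set.Ioi 0) := by
    have := integrableOn_rpow_mul_exp_neg_mul_rpow (p := 1) (s := (n:ℝ)) (b := z.re)
      (by norm_num [neg_lt_iff_pos_add]; positivity) one_pos hz
    simpa using this
  apply h.mono' ?_ ?_
  · apply Measurable.aestronglyMeasurable; fun_prop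
  · filter_upwards [MeasureTheory.ae_restrict_mem measurableSet_Ioi] with x hx
    rw [norm_mul, Complex.norm_exp, norm_pow]
    have hxx : ‖(x:ℂ)‖ = x := by
      rw [Complex.norm_real, Real.norm_of_nonneg (le_of_lt hx)]
    rw [hxx, Real.rpow_natCast]
    gcongr
    · exact pow_nonneg (le_of_lt hx) n
    simp only [neg_re, Complex.mul_re, Complex.ofReal_re, Complex.ofReal_im, mul_zero, sub_zero]
    simp [mul_comm]

lemma tend0 (z : ℂ) (hz : 0 < z.re) (n : ℕ) :
    Tendsto (fun t : ℝ => (t:ℂ)^n * Complex.exp (-(z*t))) atTop (nhds 0) := by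
  rw [tendsto_zero_iff_norm_tendsto_zero]
  have h := tendsto_rpow_mul_exp_neg_mul_atTop_nhds_zero (n:ℝ) z.re hz
  apply h.congr'
  filter_upwards [eventually_ge_atTop (0:ℝ)] with t ht
  rw [norm_mul, Complex.norm_exp, norm_pow]
  rw [Complex.norm_real, Real.norm_of_nonneg ht, Real.rpow_natCast]
  congr 1
  simp [Complex.mul_re, mul_comm]

lemma hd1 (z : ℂ) (x : ℝ) : HasDerivAt (fun t : ℝ => -(z*(t:ℂ))) (-z) x := by
  have := (((hasDerivAt_id ((x:ℝ):ℂ)).const_mul z).neg).comp_ofReal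
  simpa using this

lemma intval (z : ℂ) (hz : 0 < z.re) : ∀ n : ℕ,
    ∫ t in Set.Ioi (0:ℝ), (t:ℂ)^n * Complex.exp (-(z*t)) = n.factorial / z^(n+1) := by
  have hz0 : z ≠ 0 := fun h => by simp [h] at hz
  intro n
  induction n with
  | zero =>
    have key := integral_Ioi_of_hasDerivAt_of_tendsto (a := (0:ℝ))
      (f := fun t : ℝ => -Complex.exp (-(z*t)) / z)
      (f' := fun t : ℝ => Complex.exp (-(z*t))) (m := 0)
      ?_ ?_ ?_ ?_
    · simpa [neg_div] using key
    · exact (Continuous.continuousWithinAt (by fun_prop)).div_const z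
    · intro x hx
      have h2 := (((hd1 z x).cexp.const_mul (-(1:ℂ))).div_const z)
      convert h2 using 2 with t
      · rfl
      · field_simp
      · field_simp
    · exact (intgr z hz 0).congr_fun (fun x _ => by simp) measurableSet_Ioi
    · have := ((tend0 z hz 0).div_const z).neg
      simpa [neg_div] using this
  | succ n ih =>
    have hI1 : IntegrableOn (fun t : ℝ => -((t:ℂ)^(n+1) * Complex.exp (-(z*t)))) (Set.Ioi 0) :=
      (intgr z hz (n+1)).neg
    have hI2 : IntegrableOn (fun t : ℝ => ((n:ℂ)+1)/z * ((t:ℂ)^n * Complex.exp (-(z*t))))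
        (Set.Ioi 0) := (intgr z hz n).const_mul _
    have key := integral_Ioi_of_hasDerivAt_of_tendsto (a := (0:ℝ))
      (f := fun t : ℝ => -((t:ℂ)^(n+1) * Complex.exp (-(z*t))) / z)
      (f' := fun t : ℝ => ((t:ℂ)^(n+1) * Complex.exp (-(z*t)))
        - ((n:ℂ)+1)/z * ((t:ℂ)^n * Complex.exp (-(z*t)))) (m := 0)
      ?_ ?_ ?_ ?_
    · rw [integral_sub (intgr z hz (n+1)) hI2, integral_const_mul, ih] at key
      have h0 : (-(((0:ℝ):ℂ)^(n+1) * Complex.exp (-(z*(0:ℝ)))) / z) = 0 := by simp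
      rw [h0, zero_sub, neg_zero] at key
      have : (∫ t in Set.Ioi (0:ℝ), (t:ℂ)^(n+1) * Complex.exp (-(z*t)))
          = ((n:ℂ)+1)/z * ((n.factorial:ℂ) / z^(n+1)) := by
        linear_combination key
      rw [this, Nat.factorial_succ, pow_succ]
      push_cast
      rw [div_mul_div_comm, div_eq_div_iff (by simp [hz0]) (by simp [hz0])]
      ring
    · exact (Continuous.continuousWithinAt (by fun_prop)).div_const z
    · intro x hx
      have hp : HasDerivAt (fun t : ℝ => ((t:ℂ))^(n+1)) (((n:ℂ)+1) * (x:ℂ)^n) x := by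
        have := (hasDerivAt_pow (n+1) ((x:ℝ):ℂ)).comp_ofReal
        simpa using this
      have h2 := ((hp.mul (hd1 z x).cexp).div_const z).neg
      convert h2 using 1
      field_simp
      · ext t
        simp only [Pi.neg_apply, Pi.mul_apply]
      have hzz : z * z⁻¹ = 1 := mul_inv_cancel₀ hz0
      linear_combination -((x:ℂ)^(n+1) * Complex.exp (-(z*(x:ℂ)))) * hzz
    · exact (intgr z hz (n+1)).sub hI2
    · have := ((tend0 z hz (n+1)).div_const z).neg
      simpa [neg_div] using this

lemma norm_ai (a c : ℝ) : ‖(a:ℂ) + (c:ℂ)*Complex.I‖^2 = a^2 + c^2 := by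
  rw [Complex.norm_def, Complex.normSq_add_mul_I, Real.sq_sqrt]
  positivity

lemma lower (a c : ℝ) (ha : 0 < a) (k : ℕ) (hk : 2 ≤ k) :
    min (a^2) 1 * a^(k-2) * (1 + c^2) ≤ ‖(a:ℂ) + (c:ℂ)*Complex.I‖^k := by
  set r := ‖(a:ℂ) + (c:ℂ)*Complex.I‖ with hr
  have hr2 : r^2 = a^2 + c^2 := norm_ai a c
  have hra : a ≤ r := by
    nlinarith [norm_nonneg ((a:ℂ) + (c:ℂ)*Complex.I), sq_nonneg c]
  have hkk : r^k = r^(k-2) * r^2 := by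
    rw [← pow_add]; congr 1; omega
  rw [hkk, hr2]
  have h1 : a^(k-2) ≤ r^(k-2) := pow_le_pow_left₀ ha.le hra _
  have h2 : min (a^2) 1 * (1 + c^2) ≤ a^2 + c^2 := by
    have := min_le_left (a^2) 1
    have := min_le_right (a^2) 1
    nlinarith [sq_nonneg c, sq_nonneg a]
  calc min (a^2) 1 * a^(k-2) * (1+c^2) = a^(k-2) * (min (a^2) 1 * (1+c^2)) := by ring
  _ ≤ r^(k-2) * (a^2 + c^2) := by
      apply mul_le_mul h1 h2 (by positivity) (by positivity)
  _ = r^(k-2) * (a^2+c^2) := rfl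

lemma int_main (a ℓ : ℝ) (ha : 0 < a) (k : ℕ) (hk : 2 ≤ k) :
    Integrable (fun η : ℝ =>
      Complex.exp (2*↑π*Complex.I*(η*ℓ)) / ((a:ℂ) + 2*↑π*Complex.I*η)^k) := by
  have hC : 0 < min (a^2) 1 * a^(k-2) := by positivity
  apply ((integrable_inv_one_add_sq.const_mul ((min (a^2) 1 * a^(k-2))⁻¹))).mono'
  · apply Measurable.aestronglyMeasurable; fun_prop
  · filter_upwards with η
    rw [norm_div, norm_pow]
    have hz : ((a:ℂ) + 2*↑π*Complex.I*η) = (a:ℂ) + ((2*π*η:ℝ):ℂ)*Complex.I := by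
      push_cast; ring
    have he : ‖Complex.exp (2*↑π*Complex.I*(η*ℓ))‖ = 1 := by
      rw [Complex.norm_exp]
      norm_num [Complex.mul_re, Complex.mul_im]
    have key : min (a^2) 1 * a^(k-2) * (1+η^2)
        ≤ ‖(a:ℂ) + ((2*π*η:ℝ):ℂ)*Complex.I‖^k := by
      refine le_trans ?_ (lower a (2*π*η) ha k hk)
      have h2 : (1+η^2) ≤ (1+(2*π*η)^2) := by
        nlinarith [mul_nonneg (show (0:ℝ) ≤ 4*π^2-1 by nlinarith [Real.pi_gt_three]) (sq_nonneg η)]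
      exact mul_le_mul_of_nonneg_left h2 hC.le
    have h1 : (0:ℝ) < 1 + η^2 := by positivity
    have hCp : 0 < min (a^2) 1 * a^(k-2) * (1+η^2) := by
      apply mul_pos hC h1
    rw [he, hz, one_div, ← mul_inv, inv_le_inv₀ (lt_of_lt_of_le hCp key) hCp]
    exact key

lemma four (a : ℝ) (ha : 0 < a) (k : ℕ) (hk : 2 ≤ k) (ℓ : ℝ) (hℓ : 0 < ℓ) :
    ∫ η : ℝ, Complex.exp (2*↑π*Complex.I*(η*ℓ)) / ((a:ℂ) + 2*↑π*Complex.I*η)^k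
      = Real.exp (-(a*ℓ)) * (ℓ:ℂ)^(k-1) / ((k-1).factorial : ℂ) := by
  have hk1 : k - 1 + 1 = k := by omega
  set g : ℝ → ℂ := (Set.Ioi (0:ℝ)).indicator
    (fun t : ℝ => (t:ℂ)^(k-1) * Complex.exp (-((a:ℂ)*t))) with hgdef
  have hg_int : Integrable g := by
    rw [hgdef, integrable_indicator_iff measurableSet_Ioi]
    exact intgr (a:ℂ) (by simpa using ha) (k-1)
  have hF : ∀ η : ℝ, 𝓕 g η = ((k-1).factorial : ℂ) / ((a:ℂ) + 2*↑π*Complex.I*η)^k := by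
    intro η
    rw [Real.fourier_real_eq_integral_exp_smul]
    have hsm : ∀ v : ℝ, Complex.exp (↑(-2 * π * v * η) * Complex.I) • g v
        = (Set.Ioi (0:ℝ)).indicator
          (fun t : ℝ => (t:ℂ)^(k-1) * Complex.exp (-(((a:ℂ) + 2*↑π*Complex.I*η)*t))) v := by
      intro v
      by_cases hv : v ∈ Set.Ioi (0:ℝ)
      · rw [hgdef]
        simp only [Set.indicator_of_mem hv, smul_eq_mul]
        rw [show Complex.exp (↑(-2 * π * v * η) * Complex.I) * ((v:ℂ)^(k-1)
            * Complex.exp (-((a:ℂ)*v))) = (v:ℂ)^(k-1) * (Complex.exp (↑(-2 * π * v * η)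
            * Complex.I) * Complex.exp (-((a:ℂ)*(v:ℝ)))) by ring, ← Complex.exp_add]
        congr 1
        push_cast; ring
      · rw [hgdef]
        simp only [Set.indicator_of_notMem hv, smul_eq_mul, mul_zero]
    simp_rw [hsm]
    rw [MeasureTheory.integral_indicator measurableSet_Ioi]
    rw [intval ((a:ℂ) + 2*↑π*Complex.I*η) (by simp [Complex.add_re, Complex.mul_re]; positivity) (k-1), hk1]
  have hFint : Integrable (𝓕 g) := by
    apply ((int_main a 0 ha k hk).const_mul ((k-1).factorial : ℂ)).congr
    filter_upwards with η
    rw [hF η]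
    simp [div_eq_mul_inv, mul_comm]
  have hcont : ContinuousAt g ℓ := by
    have hmem : Set.Ioi (0:ℝ) ∈ nhds ℓ := isOpen_Ioi.mem_nhds hℓ
    have heq : g =ᶠ[nhds ℓ] (fun t : ℝ => (t:ℂ)^(k-1) * Complex.exp (-((a:ℂ)*t))) := by
      filter_upwards [hmem] with t ht
      rw [hgdef]; simp [Set.indicator_of_mem ht]
    apply ContinuousAt.congr _ heq.symm
    fun_prop
  have hinv := hg_int.fourierInv_fourier_eq hFint hcont
  rw [Real.fourierInv_eq'] at hinv
  have hgl : g ℓ = (Real.exp (-(a*ℓ)) : ℂ) * (ℓ:ℂ)^(k-1) := by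
    rw [hgdef]
    rw [Set.indicator_of_mem (Set.mem_Ioi.mpr hℓ)]
    rw [mul_comm]
    congr 1
    rw [show -((a:ℂ)*(ℓ:ℝ)) = ((-(a*ℓ) : ℝ) : ℂ) by push_cast; ring, ← Complex.ofReal_exp]
  have hstep : ∀ η : ℝ, Complex.exp (↑(2 * π * (inner ℝ η ℓ : ℝ)) * Complex.I) • 𝓕 g η
      = ((k-1).factorial : ℂ) *
        (Complex.exp (2*↑π*Complex.I*(η*ℓ)) / ((a:ℂ) + 2*↑π*Complex.I*η)^k) := by
    intro η
    rw [hF η, smul_eq_mul]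
    have : (inner ℝ η ℓ : ℝ) = η * ℓ := by rw [RCLike.inner_apply', conj_trivial]
    rw [this]
    rw [show Complex.exp (↑(2 * π * (η * ℓ)) * Complex.I)
      = Complex.exp (2*↑π*Complex.I*((η:ℂ)*ℓ)) by congr 1; push_cast; ring]
    ring
  simp_rw [hstep] at hinv
  rw [MeasureTheory.integral_const_mul, hgl] at hinv
  have hc : ((k-1).factorial : ℂ) ≠ 0 := Nat.cast_ne_zero.mpr (Nat.factorial_ne_zero _)
  rw [eq_div_iff hc]
  linear_combination hinv

/-- for `k ≥ 2`, `1 ≤ q ≤ Q ≤ √N/2` and any arc `ξ` with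
`(-1/(2qQ), 1/(2qQ)) ⊆ ξ ⊆ (-1/(qQ), 1/(qQ)]`, uniformly for `1 ≤ ℓ ≤ N`,
`∫_ξ e(-ℓη)/z(η)^k dη = e^{-ℓ/N} ℓ^{k-1}/(k-1)! + O_k((qQ)^{k-1})`,
where `z(η) = 1/N - 2πiη`. -/
theorem sums_of_many_primes_stmt5 (k : ℕ) (hk : 2 ≤ k) :
    ∃ C : ℝ, 0 < C ∧ ∀ N q Q ℓ : ℕ, 1 ≤ q → q ≤ Q → (Q : ℝ) ≤ Real.sqrt N / 2 →
      1 ≤ ℓ → ℓ ≤ N →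
      ∀ ξ : Set ℝ, MeasurableSet ξ →
        Set.Ioo (-(1 / (2 * (q : ℝ) * Q))) (1 / (2 * (q : ℝ) * Q)) ⊆ ξ →
        ξ ⊆ Set.Ioc (-(1 / ((q : ℝ) * Q))) (1 / ((q : ℝ) * Q)) →
        ‖(∫ η in ξ, e (-(ℓ : ℝ) * η) / (1 / (N : ℂ) - 2 * Real.pi * Complex.I * η) ^ k)
            - Real.exp (-(ℓ : ℝ) / N) * (ℓ : ℝ) ^ (k - 1) / (Nat.factorial (k - 1))‖
          ≤ C * ((q : ℝ) * Q) ^ (k - 1) := by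
  refine ⟨2^k, by positivity, ?_⟩
  intro N q Q ℓ hq hqQ hQN hℓ hℓN ξ hξ hξ1 hξ2
  -- basic positivity facts
  have hq0 : (0:ℝ) < q := by exact_mod_cast hq
  have hQ0 : (0:ℝ) < Q := lt_of_lt_of_le hq0 (by exact_mod_cast hqQ)
  have hsq : (2:ℝ) ≤ Real.sqrt N := by
    have h1Q : (1:ℝ) ≤ Q := by exact_mod_cast le_trans hq hqQ
    linarith
  have hN0 : (0:ℝ) < N := by
    by_contra h
    push_neg at h
    have := Real.sqrt_eq_zero'.mpr h
    linarith
  set a : ℝ := (N:ℝ)⁻¹ with hadef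
  have ha : 0 < a := by positivity
  have hℓ0 : (0:ℝ) < ℓ := by exact_mod_cast hℓ
  set δ : ℝ := 1 / (2 * (q:ℝ) * Q) with hδdef
  have hδ0 : 0 < δ := by positivity
  set F : ℝ → ℂ := fun η => e (-(ℓ : ℝ) * η) / (1 / (N : ℂ) - 2 * Real.pi * Complex.I * η) ^ k
    with hFdef
  set H : ℝ → ℂ := fun θ =>
    Complex.exp (2*↑π*Complex.I*(θ*(ℓ:ℝ))) / ((a:ℂ) + 2*↑π*Complex.I*θ)^k with hHdef
  have hfH : ∀ η : ℝ, F η = H (-η) := by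
    intro η
    rw [hFdef, hHdef]
    simp only
    rw [e]
    have hden : (1 / (N : ℂ) - 2 * Real.pi * Complex.I * η)
        = ((a:ℂ) + 2*↑π*Complex.I*(-η:ℝ)) := by
      rw [hadef]; push_cast; ring
    rw [hden]
    congr 2
    push_cast; ring
  have hHint : Integrable H := int_main a (ℓ:ℝ) ha k hk
  have hFint : Integrable F := by
    apply hHint.comp_neg.congr
    filter_upwards with η
    exact (hfH η).symm
  -- full-line integral
  have hfull : ∫ η : ℝ, F η
      = Real.exp (-(a*ℓ)) * ((ℓ:ℝ):ℂ)^(k-1) / ((k-1).factorial : ℂ) := by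
    rw [show (∫ η : ℝ, F η) = ∫ η : ℝ, H (-η) from by simp_rw [hfH],
      integral_neg_eq_self H volume]
    exact four a ha k hk (ℓ:ℝ) hℓ0
  -- the main term equals hfull's RHS
  have hmain : (Real.exp (-(ℓ : ℝ) / N) * ((ℓ:ℝ):ℂ) ^ (k - 1) / ((Nat.factorial (k - 1)):ℂ))
      = Real.exp (-(a*ℓ)) * ((ℓ:ℝ):ℂ)^(k-1) / ((k-1).factorial : ℂ) := by
    rw [hadef]
    norm_num [div_eq_mul_inv, mul_comm]
  -- splitting
  have hsplit : (∫ η in ξ, F η) = (∫ η : ℝ, F η) - ∫ η in ξᶜ, F η := by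
    rw [← MeasureTheory.integral_add_compl hξ hFint]
    ring
  -- replace goal by tail integral
  have hks : ((k:ℝ) - 1) = ((k-1 : ℕ) : ℝ) := by
    have h1 : (1:ℕ) ≤ k := by omega
    push_cast [Nat.cast_sub h1]
    ring
  have hk1R : (1:ℝ) ≤ (k:ℝ) - 1 := by
    have : (2:ℝ) ≤ (k:ℝ) := by exact_mod_cast hk
    linarith
  -- pointwise bound
  have hnormF : ∀ η : ℝ, η ≠ 0 → ‖F η‖ ≤ |η|^(-(k:ℝ)) := by
    intro η hη
    have habs : 0 < |η| := abs_pos.mpr hη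
    rw [hFdef]
    simp only
    rw [norm_div, norm_pow]
    have he1 : ‖e (-(ℓ : ℝ) * η)‖ = 1 := by
      rw [e, Complex.norm_exp]
      norm_num [Complex.mul_re, Complex.mul_im]
    have hzim : |(1 / (N : ℂ) - 2 * Real.pi * Complex.I * η).im| = 2*π*|η| := by
      have him : (1 / (N : ℂ) - 2 * Real.pi * Complex.I * η).im = -(2*π*η) := by
        simp [Complex.div_im, Complex.mul_im, Complex.mul_re]
      rw [him, abs_neg, abs_mul, abs_of_pos (by positivity : (0:ℝ) < 2*π)]
    have hzlow : |η| ≤ ‖(1 / (N : ℂ) - 2 * Real.pi * Complex.I * η)‖ := by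
      calc |η| ≤ 2*π*|η| := by nlinarith [Real.pi_gt_three, abs_nonneg η]
        _ = |(1 / (N : ℂ) - 2 * Real.pi * Complex.I * η).im| := hzim.symm
        _ ≤ _ := by
            exact Complex.abs_im_le_norm _
    rw [he1, Real.rpow_neg (abs_nonneg η), Real.rpow_natCast, one_div, inv_eq_one_div, ← one_div]
    apply one_div_le_one_div_of_le (by positivity)
    exact pow_le_pow_left₀ (abs_nonneg η) hzlow k
  -- tail subset
  have hsub : ξᶜ ⊆ Set.Iic (-δ) ∪ Set.Ici δ := by
    intro η hη
    by_contra hcon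
    simp only [Set.mem_union, Set.mem_Iic, Set.mem_Ici, not_or, not_le] at hcon
    exact hη (hξ1 ⟨hcon.1, hcon.2⟩)
  -- the rpow integral
  have hkR : -(k:ℝ) < -1 := by
    have : (2:ℝ) ≤ (k:ℝ) := by exact_mod_cast hk
    linarith
  have hBint : IntegrableOn (fun y : ℝ => y^(-(k:ℝ))) (Set.Ioi δ) :=
    integrableOn_Ioi_rpow_of_lt hkR hδ0
  have hBval : (∫ y in Set.Ioi δ, y^(-(k:ℝ))) ≤ (2*(q:ℝ)*Q)^(k-1) := by
    rw [integral_Ioi_rpow_of_lt hkR hδ0]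
    have hne : ((k:ℝ) - 1) ≠ 0 := by linarith
    have h1 : -δ^(-(k:ℝ)+1)/(-(k:ℝ)+1) = δ^(-(k:ℝ)+1)/((k:ℝ)-1) := by
      rw [div_eq_div_iff (by linarith) (by linarith)]
      ring
    rw [h1]
    have h2 : δ^(-(k:ℝ)+1) = (2*(q:ℝ)*Q)^(k-1 : ℕ) := by
      rw [hδdef, one_div, ← Real.rpow_neg_one (2*(q:ℝ)*Q), ← Real.rpow_natCast (2*(q:ℝ)*Q) (k-1),
        ← Real.rpow_mul (by positivity)]
      congr 1
      rw [← hks]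
      ring
    rw [h2]
    rw [div_le_iff₀ (by linarith)]
    nlinarith [pow_nonneg (by positivity : (0:ℝ) ≤ 2*(q:ℝ)*Q) (k-1)]
  -- tail bounds
  have htail1 : (∫ x in Set.Iic (-δ), ‖F x‖) ≤ (2*(q:ℝ)*Q)^(k-1) := by
    have heq : (∫ x in Set.Iic (-δ), ‖F x‖) = ∫ y in Set.Ioi δ, ‖F (-y)‖ := by
      rw [show (fun x : ℝ => ‖F x‖) = (fun x : ℝ => (fun y : ℝ => ‖F (-y)‖) (-x)) from
        funext fun x => by simp]
      rw [integral_comp_neg_Iic (-δ) (fun y => ‖F (-y)‖), neg_neg]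
    rw [heq]
    refine le_trans (setIntegral_mono_on (hFint.norm.comp_neg.integrableOn) hBint
      measurableSet_Ioi ?_) hBval
    intro y hy
    have hy0 : 0 < y := lt_trans hδ0 hy
    have hh := hnormF (-y) (by simp [ne_of_gt hy0])
    simpa [abs_of_pos hy0] using hh
  have htail2 : (∫ x in Set.Ici δ, ‖F x‖) ≤ (2*(q:ℝ)*Q)^(k-1) := by
    rw [MeasureTheory.integral_Ici_eq_integral_Ioi]
    refine le_trans (setIntegral_mono_on (hFint.norm.integrableOn) hBint
      measurableSet_Ioi ?_) hBval
    intro y hy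
    have hy0 : 0 < y := lt_trans hδ0 hy
    have hh := hnormF y (ne_of_gt hy0)
    simpa [abs_of_pos hy0] using hh
  -- combine
  have hcompl : ‖∫ η in ξᶜ, F η‖ ≤ 2^k * ((q:ℝ)*Q)^(k-1) := by
    calc ‖∫ η in ξᶜ, F η‖ ≤ ∫ η in ξᶜ, ‖F η‖ := norm_integral_le_integral_norm _
      _ ≤ ∫ η in (Set.Iic (-δ) ∪ Set.Ici δ), ‖F η‖ := by
          apply setIntegral_mono_set (hFint.norm.integrableOn)
          · filter_upwards with x using norm_nonneg _
          · exact HasSubset.Subset.eventuallyLE hsub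
      _ = (∫ x in Set.Iic (-δ), ‖F x‖) + ∫ x in Set.Ici δ, ‖F x‖ := by
          apply setIntegral_union ?_ measurableSet_Ici
            (hFint.norm.integrableOn) (hFint.norm.integrableOn)
          apply Set.disjoint_left.mpr
          intro x hx1 hx2
          simp only [Set.mem_Iic] at hx1
          simp only [Set.mem_Ici] at hx2
          linarith
      _ ≤ (2*(q:ℝ)*Q)^(k-1) + (2*(q:ℝ)*Q)^(k-1) := add_le_add htail1 htail2
      _ = 2^k * ((q:ℝ)*Q)^(k-1) := by
          have hkm : (2:ℝ)^k = 2 * 2^(k-1) := by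
            rw [← pow_succ']
            congr 1
            omega
          rw [show 2*(q:ℝ)*Q = 2*((q:ℝ)*Q) by ring, mul_pow, hkm]
          ring
  -- final
  have hdiff : (∫ η in ξ, F η)
      - ((Real.exp (-(ℓ : ℝ) / N) : ℂ) * ((ℓ:ℝ):ℂ) ^ (k - 1) / ((Nat.factorial (k - 1)):ℂ))
      = -∫ η in ξᶜ, F η := by
    rw [hsplit, hfull, hmain]
    ring
  rw [hdiff, norm_neg]
  exact hcompl
end
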